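/- For a single unordered character on a tree, if edge (u, v) has root sets with VV(u) ∩ VV(v) ≠ ∅, then contracting (u, v) into a new vertex w yields a tree with the same MP-cost, and the root set of w in the contracted tree equals VV(u) ∩ VV(v). -/

import Mathlib

open scoped Classical

/-- The cost of a full state assignment `f`: the number of edges of `G` whose
two endpoints receive different states. -/
noncomputable def assignCost {V S : Type} [Fintype V] (G : SimpleGraph V)
    (f : V → S) : ℕ :=
  (Finset.univ.filter (fun p : V × V => G.Adj p.1 p.2 ∧ f p.1 ≠ f p.2)).card / 2

/-- `f` extends the partial labelling `ℓ`. -/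
def Extends {V S : Type} (ℓ : V → Option S) (f : V → S) : Prop :=
  ∀ v s, ℓ v = some s → f v = s

/-- The most parsimonious cost: the minimum, over all state assignments
extending the fixed labels, of the number of edges with differing endpoint states. -/
noncomputable def mpCost {V S : Type} [Fintype V] (G : SimpleGraph V)
    (ℓ : V → Option S) : ℕ :=
  sInf {c | ∃ f : V → S, Extends ℓ f ∧ c = assignCost G f}

/-- `f` is a minimum-cost assignment extending `ℓ`. -/
def IsOptimal {V S : Type} [Fintype V] (G : SimpleGraph V) (ℓ : V → Option S)
    (f : V → S) : Prop :=
  Extends ℓ f ∧ assignCost G f = mpCost G ℓ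

/-- The root set of a vertex: the set of states it receives across all
minimum-cost assignments extending the labels. -/
def rootSet {V S : Type} [Fintype V] (G : SimpleGraph V) (ℓ : V → Option S)
    (v : V) : Set S :=
  {s | ∃ f : V → S, IsOptimal G ℓ f ∧ f v = s}


/-- Contract the edge `(u, v)`: identify `u` and `v` into the single vertex
`u`, which becomes adjacent to all former neighbors of `u` and of `v`. -/
def contractGraph {V : Type} (G : SimpleGraph V) (u v : V) :
    SimpleGraph {z : V // z ≠ v} where
  Adj a b := a ≠ b ∧
    (G.Adj a.1 b.1 ∨ (a.1 = u ∧ G.Adj v b.1) ∨ (b.1 = u ∧ G.Adj v a.1))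
  symm := by
    refine ⟨?_⟩
    rintro a b ⟨hab, h⟩
    refine ⟨hab.symm, ?_⟩
    rcases h with h | ⟨h1, h2⟩ | ⟨h1, h2⟩
    · exact Or.inl h.symm
    · exact Or.inr (Or.inr ⟨h1, h2⟩)
    · exact Or.inr (Or.inl ⟨h1, h2⟩)
  loopless := by refine ⟨?_⟩; rintro a ⟨h, -⟩; exact h rfl

noncomputable def dCost {V S : Type} [Fintype V] (G : SimpleGraph V)
    (f : V → S) : ℕ :=
  (Finset.univ.filter (fun p : V × V => G.Adj p.1 p.2 ∧ f p.1 ≠ f p.2)).card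

lemma even_card_invol {α : Type*} (i : α → α) :
    ∀ s : Finset α, (∀ a ∈ s, i a ∈ s) → (∀ a ∈ s, i (i a) = a) →
    (∀ a ∈ s, i a ≠ a) → Even s.card := by
  intro s
  induction s using Finset.strongInduction with
  | _ s ih =>
    intro hmem hinv hne
    rcases s.eq_empty_or_nonempty with rfl | ⟨a, ha⟩
    · simp
    · have hia : i a ∈ s := hmem a ha
      have hane : a ≠ i a := (hne a ha).symm
      have hsub : ({a, i a} : Finset α) ⊆ s := by
        intro x hx
        simp only [Finset.mem_insert, Finset.mem_singleton] at hx
        rcases hx with rfl | rfl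
        · exact ha
        · exact hia
      have hc2 : ({a, i a} : Finset α).card = 2 := by
        rw [Finset.card_insert_of_notMem (by simpa using hane), Finset.card_singleton]
      set t := s \ {a, i a} with ht
      have htss : t ⊂ s := by
        refine Finset.sdiff_ssubset hsub ?_
        exact ⟨a, by simp⟩
      have hmemt : ∀ b ∈ t, b ∈ s ∧ b ≠ a ∧ b ≠ i a := by
        intro b hb
        simp only [ht, Finset.mem_sdiff, Finset.mem_insert, Finset.mem_singleton] at hb
        exact ⟨hb.1, fun h => hb.2 (Or.inl h), fun h => hb.2 (Or.inr h)⟩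
      have hEt : Even t.card := by
        apply ih t htss
        · intro b hb
          obtain ⟨hbs, hba, hbia⟩ := hmemt b hb
          simp only [ht, Finset.mem_sdiff, Finset.mem_insert, Finset.mem_singleton]
          refine ⟨hmem b hbs, ?_⟩
          rintro (h | h)
          · exact hbia (by rw [← h, hinv b hbs])
          · exact hba (by
              have := congrArg i h
              rwa [hinv b hbs, hinv a ha] at this)
        · intro b hb; exact hinv b (hmemt b hb).1
        · intro b hb; exact hne b (hmemt b hb).1
      have hcard : s.card = t.card + 2 := by
        rw [ht, Finset.card_sdiff_of_subset hsub, hc2]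
        have : 2 ≤ s.card := hc2 ▸ Finset.card_le_card hsub
        omega
      rw [hcard]
      exact hEt.add (by norm_num)

lemma dCost_even {V S : Type} [Fintype V] (G : SimpleGraph V) (f : V → S) :
    Even (dCost G f) := by
  apply even_card_invol Prod.swap
  · rintro ⟨x, y⟩ h
    simp only [Finset.mem_filter, Finset.mem_univ, true_and] at h ⊢
    exact ⟨h.1.symm, fun hc => h.2 hc.symm⟩
  · rintro ⟨x, y⟩ -
    rfl
  · rintro ⟨x, y⟩ h heq
    simp only [Finset.mem_filter, Finset.mem_univ, true_and] at h
    simp only [Prod.swap_prod_mk, Prod.mk.injEq] at heq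
    exact h.2 (by rw [heq.1])

lemma adj_del {V : Type} {G : SimpleGraph V} {u v x y : V} (h : G.Adj x y)
    (h1 : ¬(x = u ∧ y = v)) (h2 : ¬(x = v ∧ y = u)) :
    (G \ SimpleGraph.fromEdgeSet {s(u, v)}).Adj x y := by
  rw [SimpleGraph.sdiff_adj]
  refine ⟨h, ?_⟩
  rw [SimpleGraph.fromEdgeSet_adj]
  rintro ⟨hm, -⟩
  simp only [Set.mem_singleton_iff, Sym2.eq_iff] at hm
  tauto

lemma bridge_nr {V : Type} {G : SimpleGraph V} {u v : V} (hT : G.IsTree)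
    (hadj : G.Adj u v) :
    ¬(G \ SimpleGraph.fromEdgeSet {s(u, v)}).Reachable u v :=
  ((SimpleGraph.isBridge_iff).mp
    (SimpleGraph.isAcyclic_iff_forall_adj_isBridge.mp hT.IsAcyclic hadj))

lemma no_common {V : Type} {G : SimpleGraph V} {u v : V} (hT : G.IsTree)
    (hadj : G.Adj u v) {y : V} (h1 : G.Adj u y) (h2 : G.Adj v y) : False := by
  apply bridge_nr hT hadj
  have a1 : (G \ SimpleGraph.fromEdgeSet {s(u, v)}).Adj u y :=
    adj_del h1 (fun h => h2.ne (h.2.symm)) (fun h => hadj.ne h.1)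
  have a2 : (G \ SimpleGraph.fromEdgeSet {s(u, v)}).Adj y v :=
    adj_del h2.symm (fun h => h1.ne h.1.symm) (fun h => hadj.ne h.2.symm)
  exact a1.reachable.trans a2.reachable

lemma cross_uv {V : Type} {G : SimpleGraph V} {u v : V} (hT : G.IsTree)
    (hadj : G.Adj u v) {x y : V}
    (hx : (G \ SimpleGraph.fromEdgeSet {s(u, v)}).Reachable u x)
    (hy : ¬(G \ SimpleGraph.fromEdgeSet {s(u, v)}).Reachable u y)
    (hxy : G.Adj x y) : x = u ∧ y = v := by
  by_cases h1 : x = u ∧ y = v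
  · exact h1
  exfalso
  by_cases h2 : x = v ∧ y = u
  · exact bridge_nr hT hadj (h2.1 ▸ hx)
  · exact hy (hx.trans (adj_del hxy h1 h2).reachable)

lemma card_filter_ext {a : Type} [Fintype a] {p q : a → Prop}
    {hp : DecidablePred p} {hq : DecidablePred q} (h : ∀ x, p x ↔ q x) :
    (@Finset.filter a p hp Finset.univ).card = (@Finset.filter a q hq Finset.univ).card := by
  have he : @Finset.filter a p hp Finset.univ = @Finset.filter a q hq Finset.univ := by
    ext x
    simp only [Finset.mem_filter, Finset.mem_univ, true_and]
    exact h x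
  exact congrArg Finset.card he

noncomputable def dIn {V S : Type} [Fintype V] (G : SimpleGraph V)
    (A : V → Prop) (f : V → S) : ℕ :=
  (Finset.univ.filter
    (fun p : V × V => (G.Adj p.1 p.2 ∧ f p.1 ≠ f p.2) ∧ A p.1 ∧ A p.2)).card

lemma dIn_congr {V S : Type} [Fintype V] (G : SimpleGraph V)
    (A : V → Prop) {f g : V → S} (h : ∀ x, A x → f x = g x) :
    dIn G A f = dIn G A g := by
  unfold dIn
  congr 1
  apply Finset.filter_congr
  rintro ⟨x, y⟩ -
  constructor
  · rintro ⟨⟨ha, hne⟩, hx, hy⟩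
    exact ⟨⟨ha, by rw [← h x hx, ← h y hy]; exact hne⟩, hx, hy⟩
  · rintro ⟨⟨ha, hne⟩, hx, hy⟩
    exact ⟨⟨ha, by rw [h x hx, h y hy]; exact hne⟩, hx, hy⟩

lemma d_split {V S : Type} [Fintype V] (G : SimpleGraph V) (A : V → Prop)
    (u v : V) (hAu : A u) (hAv : ¬A v) (hadj : G.Adj u v)
    (hcross : ∀ x y, G.Adj x y → A x → ¬A y → x = u ∧ y = v)
    (f : V → S) :
    dCost G f = dIn G A f + dIn G (fun x => ¬A x) f +
      (if f u = f v then 0 else 2) := by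
  classical
  set P : V × V → Prop := fun p => G.Adj p.1 p.2 ∧ f p.1 ≠ f p.2 with hP
  set s : Finset (V × V) := Finset.univ.filter P with hs
  -- cross filters
  have ecross1 : s.filter (fun p => A p.1 ∧ ¬A p.2) =
      if f u = f v then (∅ : Finset (V × V)) else {(u, v)} := by
    ext ⟨x, y⟩
    simp only [hs, Finset.filter_filter, Finset.mem_filter, Finset.mem_univ, true_and]
    constructor
    · rintro ⟨⟨hxy, hfxy⟩, hx, hy⟩
      obtain ⟨rfl, rfl⟩ := hcross x y hxy hx hy
      rw [if_neg hfxy]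
      simp
    · intro hm
      by_cases hfc : f u = f v
      · rw [if_pos hfc] at hm; simp at hm
      · rw [if_neg hfc] at hm
        simp only [Finset.mem_singleton, Prod.mk.injEq] at hm
        obtain ⟨rfl, rfl⟩ := hm
        exact ⟨⟨hadj, hfc⟩, hAu, hAv⟩
  have ecross2 : s.filter (fun p => ¬A p.1 ∧ A p.2) =
      if f u = f v then (∅ : Finset (V × V)) else {(v, u)} := by
    ext ⟨x, y⟩
    simp only [hs, Finset.filter_filter, Finset.mem_filter, Finset.mem_univ, true_and]
    constructor
    · rintro ⟨⟨hxy, hfxy⟩, hx, hy⟩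
      obtain ⟨rfl, rfl⟩ := hcross y x hxy.symm hy hx
      rw [if_neg (fun h => hfxy h.symm)]
      simp
    · intro hm
      by_cases hfc : f u = f v
      · rw [if_pos hfc] at hm; simp at hm
      · rw [if_neg hfc] at hm
        simp only [Finset.mem_singleton, Prod.mk.injEq] at hm
        obtain ⟨rfl, rfl⟩ := hm
        exact ⟨⟨hadj.symm, fun h => hfc h.symm⟩, hAv, hAu⟩
  have split1 : (s.filter (fun p => A p.1)).card + (s.filter (fun p => ¬A p.1)).card
      = s.card := Finset.card_filter_add_card_filter_not _
  have split2 : ((s.filter (fun p => A p.1)).filter (fun p => A p.2)).card +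
      ((s.filter (fun p => A p.1)).filter (fun p => ¬A p.2)).card
      = (s.filter (fun p => A p.1)).card :=
    Finset.card_filter_add_card_filter_not _
  have split3 : ((s.filter (fun p => ¬A p.1)).filter (fun p => ¬A p.2)).card +
      ((s.filter (fun p => ¬A p.1)).filter (fun p => ¬¬A p.2)).card
      = (s.filter (fun p => ¬A p.1)).card :=
    Finset.card_filter_add_card_filter_not _
  have r1 : (s.filter (fun p => A p.1)).filter (fun p => A p.2)
      = Finset.univ.filter (fun p : V × V => P p ∧ A p.1 ∧ A p.2) := by
    rw [hs, Finset.filter_filter, Finset.filter_filter]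
    try (apply Finset.filter_congr; intro p _; tauto)
  have r2 : (s.filter (fun p => A p.1)).filter (fun p => ¬A p.2)
      = s.filter (fun p => A p.1 ∧ ¬A p.2) := by
    rw [Finset.filter_filter]
  have r3 : (s.filter (fun p => ¬A p.1)).filter (fun p => ¬A p.2)
      = Finset.univ.filter (fun p : V × V => P p ∧ ¬A p.1 ∧ ¬A p.2) := by
    rw [hs, Finset.filter_filter, Finset.filter_filter]
    try (apply Finset.filter_congr; intro p _; tauto)
  have r4 : (s.filter (fun p => ¬A p.1)).filter (fun p => ¬¬A p.2)
      = s.filter (fun p => ¬A p.1 ∧ A p.2) := by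
    rw [Finset.filter_filter]
    try (apply Finset.filter_congr; intro p _; tauto)
  have hcard1 : (s.filter (fun p => A p.1 ∧ ¬A p.2)).card
      = if f u = f v then 0 else 1 := by
    rw [ecross1]; split <;> simp
  have hcard2 : (s.filter (fun p => ¬A p.1 ∧ A p.2)).card
      = if f u = f v then 0 else 1 := by
    rw [ecross2]; split <;> simp
  have hd : dCost G f = s.card := rfl
  have hdA : dIn G A f = ((s.filter (fun p => A p.1)).filter (fun p => A p.2)).card := by
    rw [r1]; rfl
  have hdB : dIn G (fun x => ¬A x) f
      = ((s.filter (fun p => ¬A p.1)).filter (fun p => ¬A p.2)).card := by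
    rw [r3]
    unfold dIn
    exact card_filter_ext (fun p => Iff.rfl)
  rw [hd, hdA, hdB]
  rw [r2] at split2
  rw [r4] at split3
  rw [hcard1] at split2
  rw [hcard2] at split3
  by_cases hfc : f u = f v
  · rw [if_pos hfc] at split2 split3 ⊢; omega
  · rw [if_neg hfc] at split2 split3 ⊢; omega

lemma dCost_eq_two_mul {V S : Type} [Fintype V] (G : SimpleGraph V) (f : V → S) :
    dCost G f = 2 * assignCost G f := by
  obtain ⟨k, hk⟩ := dCost_even G f
  have h2 : assignCost G f = dCost G f / 2 := rfl
  omega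

lemma exists_optimal {V S : Type} [Fintype V] [Nonempty S] (G : SimpleGraph V)
    (ℓ : V → Option S) : ∃ f : V → S, IsOptimal G ℓ f := by
  have hne : {c | ∃ f : V → S, Extends ℓ f ∧ c = assignCost G f}.Nonempty := by
    refine ⟨_, fun x => (ℓ x).getD (Classical.arbitrary S), ?_, rfl⟩
    intro x s hx
    simp [hx]
  obtain ⟨f, hf, hc⟩ := Nat.sInf_mem hne
  exact ⟨f, hf, hc.symm⟩

lemma mpCost_le {V S : Type} [Fintype V] (G : SimpleGraph V) (ℓ : V → Option S)
    {f : V → S} (h : Extends ℓ f) : mpCost G ℓ ≤ assignCost G f :=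
  Nat.sInf_le ⟨f, h, rfl⟩

lemma exchange {V S : Type} [Fintype V] [Nonempty S] {G : SimpleGraph V}
    {ℓ : V → Option S} {u v : V} (hT : G.IsTree) (hadj : G.Adj u v)
    {s : S} (hsu : s ∈ rootSet G ℓ u) (hsv : s ∈ rootSet G ℓ v) :
    ∃ h : V → S, IsOptimal G ℓ h ∧ h u = s ∧ h v = s := by
  obtain ⟨f, hf, hfu⟩ := hsu
  obtain ⟨g, hg, hgv⟩ := hsv
  by_cases hfv : f v = s
  · exact ⟨f, hf, hfu, hfv⟩
  by_cases hgu : g u = s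
  · exact ⟨g, hg, hgu, hgv⟩
  exfalso
  set A : V → Prop := fun x => (G \ SimpleGraph.fromEdgeSet {s(u, v)}).Reachable u x with hA
  have hAu : A u := SimpleGraph.Reachable.refl u
  have hAv : ¬A v := bridge_nr hT hadj
  have hcross : ∀ x y, G.Adj x y → A x → ¬A y → x = u ∧ y = v :=
    fun x y hxy hx hy => cross_uv hT hadj hx hy hxy
  set h1 : V → S := fun x => if A x then f x else g x with hh1
  set h2 : V → S := fun x => if A x then g x else f x with hh2
  have hext1 : Extends ℓ h1 := by
    intro x t hx
    by_cases hax : A x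
    · rw [hh1]; simp only [if_pos hax]; exact hf.1 x t hx
    · rw [hh1]; simp only [if_neg hax]; exact hg.1 x t hx
  have hext2 : Extends ℓ h2 := by
    intro x t hx
    by_cases hax : A x
    · rw [hh2]; simp only [if_pos hax]; exact hg.1 x t hx
    · rw [hh2]; simp only [if_neg hax]; exact hf.1 x t hx
  have h1u : h1 u = s := by rw [hh1]; simp only [if_pos hAu]; exact hfu
  have h1v : h1 v = s := by rw [hh1]; simp only [if_neg hAv]; exact hgv
  -- d-cost computations
  have df : dCost G f = dIn G A f + dIn G (fun x => ¬A x) f + 2 := by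
    rw [d_split G A u v hAu hAv hadj hcross f, if_neg (fun h => hfv (by rw [← h, hfu]))]
  have dg : dCost G g = dIn G A g + dIn G (fun x => ¬A x) g + 2 := by
    rw [d_split G A u v hAu hAv hadj hcross g, if_neg (fun h => hgu (h.trans hgv))]
  have dh1 : dCost G h1 = dIn G A f + dIn G (fun x => ¬A x) g + 0 := by
    rw [d_split G A u v hAu hAv hadj hcross h1, if_pos (h1u.trans h1v.symm),
      dIn_congr G A (f := h1) (g := f) (fun x hx => if_pos hx),
      dIn_congr G (fun x => ¬A x) (f := h1) (g := g) (fun x hx => if_neg hx)]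
  have dh2 : dCost G h2 ≤ dIn G A g + dIn G (fun x => ¬A x) f + 2 := by
    rw [d_split G A u v hAu hAv hadj hcross h2,
      dIn_congr G A (f := h2) (g := g) (fun x hx => if_pos hx),
      dIn_congr G (fun x => ¬A x) (f := h2) (g := f) (fun x hx => if_neg hx)]
    split <;> omega
  have ef : dCost G f = 2 * mpCost G ℓ := by rw [dCost_eq_two_mul, hf.2]
  have eg : dCost G g = 2 * mpCost G ℓ := by rw [dCost_eq_two_mul, hg.2]
  have eh1 : 2 * mpCost G ℓ ≤ dCost G h1 := by
    rw [dCost_eq_two_mul]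
    exact Nat.mul_le_mul_left 2 (mpCost_le G ℓ hext1)
  have eh2 : 2 * mpCost G ℓ ≤ dCost G h2 := by
    rw [dCost_eq_two_mul]
    exact Nat.mul_le_mul_left 2 (mpCost_le G ℓ hext2)
  omega

lemma dCost_contract {V S : Type} [Fintype V] {G : SimpleGraph V} {u v : V}
    (hT : G.IsTree) (hadj : G.Adj u v) (f : V → S) (hf : f u = f v) :
    dCost (contractGraph G u v) (fun a : {z : V // z ≠ v} => f a.1) = dCost G f := by
  classical
  set φ : V → {z : V // z ≠ v} := fun x => if hx : x = v then ⟨u, hadj.ne⟩ else ⟨x, hx⟩ with hφ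
  have hφval : ∀ x, f (φ x).1 = f x := by
    intro x
    by_cases hx : x = v
    · subst hx
      rw [hφ]
      simp only [dif_pos]
      exact hf
    · rw [hφ]
      simp only [dif_neg hx]
  have hφv : φ v = ⟨u, hadj.ne⟩ := by rw [hφ]; simp
  have hφn : ∀ x (hx : x ≠ v), φ x = ⟨x, hx⟩ := by
    intro x hx; rw [hφ]; simp [hx]
  have hφinj : ∀ x y, φ x = φ y → x = y ∨ (x = u ∧ y = v) ∨ (x = v ∧ y = u) := by
    intro x y hxy
    by_cases hx : x = v <;> by_cases hy : y = v
    · left; rw [hx, hy]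
    · subst hx
      rw [hφv, hφn y hy] at hxy
      right; right
      exact ⟨rfl, ((Subtype.mk.injEq _ _ _ _).mp hxy).symm⟩
    · subst hy
      rw [hφv, hφn x hx] at hxy
      right; left
      exact ⟨(Subtype.mk.injEq _ _ _ _).mp hxy, rfl⟩
    · rw [hφn x hx, hφn y hy] at hxy
      left
      exact (Subtype.mk.injEq _ _ _ _).mp hxy
  symm
  unfold dCost
  apply Finset.card_bij (fun p _ => (φ p.1, φ p.2))
  -- membership
  · rintro ⟨x, y⟩ hp
    simp only [Finset.mem_filter, Finset.mem_univ, true_and] at hp ⊢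
    obtain ⟨hxy, hne⟩ := hp
    refine ⟨?_, by rw [hφval, hφval]; exact hne⟩
    by_cases hx : x = v <;> by_cases hy : y = v
    · exfalso; rw [hx, hy] at hxy; exact G.loopless.irrefl v hxy
    · subst hx
      rw [hφv, hφn y hy]
      have hyu : y ≠ u := fun h => hne (hf.symm.trans (congrArg f h.symm))
      exact ⟨fun h => hyu ((Subtype.mk.injEq _ _ _ _).mp h).symm,
        Or.inr (Or.inl ⟨rfl, hxy⟩)⟩
    · subst hy
      rw [hφv, hφn x hx]
      have hxu : x ≠ u := fun h => hne ((congrArg f h).trans hf)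
      exact ⟨fun h => hxu ((Subtype.mk.injEq _ _ _ _).mp h),
        Or.inr (Or.inr ⟨rfl, hxy.symm⟩)⟩
    · rw [hφn x hx, hφn y hy]
      exact ⟨fun h => hxy.ne ((Subtype.mk.injEq _ _ _ _).mp h),
        Or.inl hxy⟩
  -- injectivity
  · rintro ⟨x₁, x₂⟩ hp ⟨y₁, y₂⟩ hq heq
    simp only [Finset.mem_filter, Finset.mem_univ, true_and] at hp hq
    obtain ⟨hpa, hpf⟩ := hp
    obtain ⟨hqa, hqf⟩ := hq
    have e1 := hφinj _ _ (congrArg Prod.fst heq)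
    have e2 := hφinj _ _ (congrArg Prod.snd heq)
    simp only at e1 e2
    rcases e1 with rfl | ⟨rfl, rfl⟩ | ⟨rfl, rfl⟩ <;>
      rcases e2 with rfl | ⟨rfl, rfl⟩ | ⟨rfl, rfl⟩ <;>
      first
        | rfl
        | exact (no_common hT hadj hpa.symm hqa.symm).elim
        | exact (no_common hT hadj hqa.symm hpa.symm).elim
        | exact (no_common hT hadj hpa hqa).elim
        | exact (no_common hT hadj hqa hpa).elim
        | exact absurd hf hpf
        | exact absurd hf.symm hpf
        | exact absurd hf hqf
        | exact absurd hf.symm hqf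
        | exact absurd hpa (G.loopless.irrefl _)
        | exact absurd hqa (G.loopless.irrefl _)
  -- surjectivity
  · rintro ⟨a, b⟩ hb
    simp only [Finset.mem_filter, Finset.mem_univ, true_and] at hb
    obtain ⟨⟨hne, hor⟩, hfab⟩ := hb
    rcases hor with h | ⟨hau, hvb⟩ | ⟨hbu, hva⟩
    · refine ⟨(a.1, b.1), ?_, ?_⟩
      · simp only [Finset.mem_filter, Finset.mem_univ, true_and]
        exact ⟨h, hfab⟩
      · simp only [Prod.mk.injEq]
        rw [hφn a.1 a.2, hφn b.1 b.2]
        exact ⟨Subtype.ext rfl, Subtype.ext rfl⟩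
    · refine ⟨(v, b.1), ?_, ?_⟩
      · simp only [Finset.mem_filter, Finset.mem_univ, true_and]
        refine ⟨hvb, ?_⟩
        rw [hau, hf] at hfab
        exact hfab
      · simp only [Prod.mk.injEq]
        rw [hφv, hφn b.1 b.2]
        exact ⟨Subtype.ext hau.symm, Subtype.ext rfl⟩
    · refine ⟨(a.1, v), ?_, ?_⟩
      · simp only [Finset.mem_filter, Finset.mem_univ, true_and]
        refine ⟨hva.symm, ?_⟩
        rw [hbu, hf] at hfab
        exact hfab
      · simp only [Prod.mk.injEq]
        rw [hφv, hφn a.1 a.2]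
        exact ⟨Subtype.ext rfl, Subtype.ext hbu.symm⟩


lemma assignCost_contract {V S : Type} [Fintype V] {G : SimpleGraph V} {u v : V}
    (hT : G.IsTree) (hadj : G.Adj u v) (f : V → S) (hf : f u = f v) :
    assignCost (contractGraph G u v) (fun a : {z : V // z ≠ v} => f a.1)
      = assignCost G f := by
  have h1 : assignCost (contractGraph G u v) (fun a : {z : V // z ≠ v} => f a.1)
      = dCost (contractGraph G u v) (fun a : {z : V // z ≠ v} => f a.1) / 2 := rfl
  have h2 : assignCost G f = dCost G f / 2 := rfl
  rw [h1, h2, dCost_contract hT hadj f hf]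

noncomputable def liftF {V S : Type} {u v : V} (hne : u ≠ v)
    (g : {z : V // z ≠ v} → S) : V → S :=
  fun x => if hx : x = v then g ⟨u, hne⟩ else g ⟨x, hx⟩

/-- If the root sets of the endpoints of an edge `(u, v)` (both unlabelled
internal nodes) intersect, then contracting the edge preserves the MP-cost,
and the root set of the merged vertex `w` equals `VV(u) ∩ VV(v)`. -/
theorem contract_mpCost_and_rootSet {V S : Type} [Fintype V]
    [Nonempty S] (G : SimpleGraph V) (ℓ : V → Option S) (u v : V)
    (hT : G.IsTree) (hadj : G.Adj u v) (hu : ℓ u = none) (hv : ℓ v = none)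
    (hmeet : (rootSet G ℓ u ∩ rootSet G ℓ v).Nonempty) :
    mpCost (contractGraph G u v) (fun a => ℓ a.1) = mpCost G ℓ ∧
    rootSet (contractGraph G u v) (fun a => ℓ a.1) ⟨u, hadj.ne⟩ =
      rootSet G ℓ u ∩ rootSet G ℓ v := by
  classical
  have hne : u ≠ v := hadj.ne
  -- basic facts about `liftF`
  have hliftu : ∀ g : {z : V // z ≠ v} → S, liftF hne g u = g ⟨u, hne⟩ := by
    intro g; unfold liftF; rw [dif_neg hne]
  have hliftv : ∀ g : {z : V // z ≠ v} → S, liftF hne g v = g ⟨u, hne⟩ := by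
    intro g; unfold liftF; rw [dif_pos rfl]
  have hlift_eta : ∀ g : {z : V // z ≠ v} → S,
      (fun a : {z : V // z ≠ v} => liftF hne g a.1) = g := by
    intro g; funext a; unfold liftF; rw [dif_neg a.2]
  have hExtDown : ∀ {f : V → S}, Extends ℓ f →
      Extends (fun a : {z : V // z ≠ v} => ℓ a.1) (fun a => f a.1) :=
    fun hf a t ha => hf a.1 t ha
  have hExtUp : ∀ {g : {z : V // z ≠ v} → S},
      Extends (fun a : {z : V // z ≠ v} => ℓ a.1) g → Extends ℓ (liftF hne g) := by
    intro g hg x t hx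
    by_cases hxv : x = v
    · subst hxv; rw [hv] at hx; cases hx
    · have : liftF hne g x = g ⟨x, hxv⟩ := by unfold liftF; rw [dif_neg hxv]
      rw [this]
      exact hg ⟨x, hxv⟩ t hx
  have hlift_cost : ∀ g : {z : V // z ≠ v} → S,
      assignCost G (liftF hne g) = assignCost (contractGraph G u v) g := by
    intro g
    have huv : liftF hne g u = liftF hne g v := by rw [hliftu, hliftv]
    rw [← assignCost_contract hT hadj (liftF hne g) huv, hlift_eta]
  -- an optimal assignment agreeing on u and v
  obtain ⟨s0, hs0u, hs0v⟩ := hmeet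
  obtain ⟨h0, hopt0, h0u, h0v⟩ := exchange hT hadj hs0u hs0v
  -- mpCost equality
  have hle1 : mpCost (contractGraph G u v) (fun a => ℓ a.1) ≤ mpCost G ℓ := by
    calc mpCost (contractGraph G u v) (fun a => ℓ a.1)
        ≤ assignCost (contractGraph G u v) (fun a => h0 a.1) :=
          mpCost_le _ _ (hExtDown hopt0.1)
      _ = assignCost G h0 := assignCost_contract hT hadj h0 (h0u.trans h0v.symm)
      _ = mpCost G ℓ := hopt0.2
  have hle2 : mpCost G ℓ ≤ mpCost (contractGraph G u v) (fun a => ℓ a.1) := by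
    obtain ⟨g, hg⟩ := exists_optimal (contractGraph G u v) (fun a => ℓ a.1)
    calc mpCost G ℓ ≤ assignCost G (liftF hne g) := mpCost_le _ _ (hExtUp hg.1)
      _ = assignCost (contractGraph G u v) g := hlift_cost g
      _ = mpCost (contractGraph G u v) (fun a => ℓ a.1) := hg.2
  have hmp : mpCost (contractGraph G u v) (fun a => ℓ a.1) = mpCost G ℓ :=
    le_antisymm hle1 hle2
  refine ⟨hmp, ?_⟩
  apply Set.ext
  intro t
  constructor
  · rintro ⟨g, hgopt, hgu⟩
    have hcost : assignCost G (liftF hne g) = mpCost G ℓ := by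
      rw [hlift_cost g, hgopt.2, hmp]
    have hopt : IsOptimal G ℓ (liftF hne g) := ⟨hExtUp hgopt.1, hcost⟩
    exact ⟨⟨liftF hne g, hopt, by rw [hliftu]; exact hgu⟩,
      ⟨liftF hne g, hopt, by rw [hliftv]; exact hgu⟩⟩
  · rintro ⟨htu, htv⟩
    obtain ⟨h1, hopt1, h1u, h1v⟩ := exchange hT hadj htu htv
    refine ⟨fun a => h1 a.1, ⟨hExtDown hopt1.1, ?_⟩, h1u⟩
    rw [assignCost_contract hT hadj h1 (h1u.trans h1v.symm), hopt1.2, hmp]
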